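/- arXiv:1907.00741 — 2 statements merged into one kernel-verified Lean document; each statement's English description precedes it below -/
import Mathlib

section
/- Let p be a prime, q = p^d, λ a positive integer, r a positive integer with q^r > λ, μ_r = q^r − 1 − λ, and l the largest index such that the coefficient of p^l in the p-adic expansion of λ is nonzero. Let e be a (λ−1)-admissible sequence and set λ_e = λ − (λ − 1 − ρ_e(λ−1))/2. Then 0 < λ_e ≤ λ and for every integer h with l < h < rd one has (μ_r − ρ_e ρ_h(μ_r))/2 = p^h − λ_e; consequently, for l < h < h' < rd, ρ_e ρ_h(μ_r) ≽ ρ_e ρ_{h'}(μ_r). -/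
/-!
Combinatorics of Deriaz-type reflections for `SL₂` (cf. [De]).  For a prime
`p`, a positive integer `m` and `j ≥ 1`, write `m + 1 = λ_j p^j + r_j` with
`0 ≤ r_j < p^j` and set `ρ_j(m) = m - 2 r_j`; `ρ_j` is `m`-admissible if
`p ∤ λ_j`.
-/

noncomputable section

/-- The reflection `ρ_j(m) = m − 2·r_j`, where `r_j = (m+1) mod p^j`. -/
def rfl' (p j : ℕ) (m : ℤ) : ℤ := m - 2 * ((m + 1) % ((p : ℤ) ^ j))

/-- `ρ_e = ρ_{e₁} ∘ ⋯ ∘ ρ_{e_k}` for a finite sequence `e = (e₁, …, e_k)`. -/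
def rflSeq (p : ℕ) (e : List ℕ) (m : ℤ) : ℤ := e.foldr (rfl' p) m

/-- `e = (e₁, …, e_k)` is an `m`-admissible sequence: `0 < e₁ < ⋯ < e_k`, the
successive values `m > ρ_{e_k}(m) > ρ_{e_{k-1}}ρ_{e_k}(m) > ⋯` form a strictly
decreasing sequence of positive integers, and at each step `ρ_{e_j}` is
`(ρ_{e_{j+1}} ⋯ ρ_{e_k}(m))`-admissible, i.e. `p ∤ λ_{e_j}`. -/
def IsAdmSeq (p : ℕ) : List ℕ → ℤ → Prop
  | [], _ => True
  | j :: rest, m =>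
      IsAdmSeq p rest m ∧ 0 < j ∧ (∀ j' ∈ rest, j < j') ∧
      ¬ ((p : ℤ) ∣ ((rflSeq p rest m + 1) / (p : ℤ) ^ j)) ∧
      0 < rfl' p j (rflSeq p rest m) ∧
      rfl' p j (rflSeq p rest m) < rflSeq p rest m

/-- The `t`-th digit in the `p`-adic expansion of `n`. -/
def pdigit (p n t : ℕ) : ℕ := n / p ^ t % p

/-- The partial order `λ₁ ≽ λ₂` on weights obtained from `m` by admissible
sequences of reflections: writing `(m − λ₂)/2 = Σ_t m_t p^t` and
`(m − λ₁)/2 = Σ_t n_t p^t` in `p`-adic expansion, `λ₁ ≽ λ₂` iff `m_t = 0`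
implies `n_t = 0` for all `t`. -/
def PrefOrder (p : ℕ) (m lam₁ lam₂ : ℤ) : Prop :=
  ∀ t : ℕ, pdigit p ((m - lam₂) / 2).toNat t = 0 → pdigit p ((m - lam₁) / 2).toNat t = 0

lemma rfl'_add (p j : ℕ) (m C : ℤ) (h : ((p:ℤ)^j) ∣ C) :
    rfl' p j (m + C) = rfl' p j m + C := by
  obtain ⟨k, rfl⟩ := h
  unfold rfl'
  rw [show m + (p:ℤ)^j * k + 1 = (m+1) + (p:ℤ)^j*k by ring, Int.add_mul_emod_self_left]
  ring

lemma rflSeq_add (p : ℕ) (e : List ℕ) (m C : ℤ) (h : ∀ j ∈ e, ((p:ℤ)^j) ∣ C) :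
    rflSeq p e (m + C) = rflSeq p e m + C := by
  induction e with
  | nil => rfl
  | cons j rest ih =>
    show rfl' p j (rflSeq p rest (m + C)) = rfl' p j (rflSeq p rest m) + C
    rw [ih (fun j' hj' => h j' (List.mem_cons_of_mem _ hj')),
      rfl'_add _ _ _ _ (h j List.mem_cons_self)]

lemma adm_facts (p : ℕ) (e : List ℕ) (m : ℤ) (hm : 0 ≤ m)
    (he : IsAdmSeq p e m) :
    rflSeq p e m ≤ m ∧ 0 ≤ rflSeq p e m ∧ 2 ∣ (m - rflSeq p e m) ∧
      ∀ j ∈ e, (p:ℤ)^j ≤ m + 1 := by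
  induction e with
  | nil => exact ⟨le_refl _, hm, ⟨0, by simp [rflSeq]⟩, by simp⟩
  | cons j rest ih =>
    obtain ⟨hrest, hj0, hlt, hdvd, hpos, hdec⟩ := he
    obtain ⟨ih1, ih2, ih3, ih4⟩ := ih hrest
    set S := rflSeq p rest m with hS
    have hseq : rflSeq p (j::rest) m = rfl' p j S := rfl
    have hple : (p:ℤ)^j ≤ S + 1 := by
      by_contra hcon
      push_neg at hcon
      have h0 : (S + 1) / (p:ℤ)^j = 0 := Int.ediv_eq_zero_of_lt (by linarith) hcon
      exact hdvd (h0 ▸ dvd_zero _)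
    obtain ⟨k, hk⟩ := ih3
    refine ⟨?_, ?_, ?_, ?_⟩
    · rw [hseq]; linarith
    · rw [hseq]; linarith
    · rw [hseq]
      refine ⟨k + ((S+1) % (p:ℤ)^j), ?_⟩
      have : rfl' p j S = S - 2 * ((S + 1) % (p:ℤ)^j) := rfl
      rw [this]; linarith
    · intro j' hj'
      rcases List.mem_cons.mp hj' with h1 | h2
      · subst h1; linarith
      · exact ih4 j' h2

lemma lt_pow_of_digits_zero (p lam l : ℕ) (hp : 1 < p) (hlam : 0 < lam)
    (hl' : ∀ t, l < t → pdigit p lam t = 0) : lam < p ^ (l + 1) := by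
  by_contra hcon
  push_neg at hcon
  have hlog : l + 1 ≤ Nat.log p lam := (Nat.le_log_iff_pow_le hp (by omega)).mpr hcon
  have h1 : p ^ Nat.log p lam ≤ lam := Nat.pow_log_le_self p (by omega)
  have h2 : lam < p ^ (Nat.log p lam + 1) := Nat.lt_pow_succ_log_self hp lam
  have hz := hl' (Nat.log p lam) (by omega)
  unfold pdigit at hz
  have hq1 : 1 ≤ lam / p ^ Nat.log p lam :=
    (Nat.one_le_div_iff (pow_pos (by omega) _)).mpr h1
  have hq2 : lam / p ^ Nat.log p lam < p := by
    rw [Nat.div_lt_iff_lt_mul (pow_pos (by omega) _)]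
    calc lam < p ^ (Nat.log p lam + 1) := h2
    _ = p * p ^ Nat.log p lam := by ring
  rw [Nat.mod_eq_of_lt hq2] at hz
  omega

lemma pdigit_add_pow_mul (p n t k : ℕ) (hp : 0 < p) :
    pdigit p (n + p ^ (t+1) * k) t = pdigit p n t := by
  unfold pdigit
  rw [show p ^ (t+1) * k = p ^ t * (p * k) by ring,
    Nat.add_mul_div_left _ _ (pow_pos hp _), Nat.add_mul_mod_self_left]

lemma key_digits (p : ℕ) (hp : 1 < p) (A h h' : ℕ) (hA1 : 0 < A) (hAh : A ≤ p ^ h)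
    (hhh' : h ≤ h') (t : ℕ) (ht : pdigit p (p ^ h' - A) t = 0) :
    pdigit p (p ^ h - A) t = 0 := by
  by_cases htc : t < h
  · -- digits agree below h
    have hdvd : p ^ (t+1) ∣ (p ^ h' - p ^ h) :=
      Nat.dvd_sub (pow_dvd_pow p (by omega)) (pow_dvd_pow p (by omega))
    obtain ⟨k, hk⟩ := hdvd
    have hmono : p ^ h ≤ p ^ h' := Nat.pow_le_pow_right (by omega) hhh'
    have heq : p ^ h' - A = (p ^ h - A) + p ^ (t+1) * k := by omega
    rw [heq, pdigit_add_pow_mul p _ t k (by omega)] at ht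
    exact ht
  · -- t ≥ h : digit is 0 anyway
    unfold pdigit
    have : p ^ h - A < p ^ t := by
      have h1 : p ^ h ≤ p ^ t := Nat.pow_le_pow_right (by omega) (by omega)
      omega
    rw [Nat.div_eq_of_lt this, Nat.zero_mod]

/-- **Lemma 4.8.**  Let `p` be a prime, `q = p^d`, `λ > 0`, `r > 0` with
`q^r > λ`, `μ_r = q^r − 1 − λ`, and let `l` be the largest index whose digit
in the `p`-adic expansion of `λ` is nonzero.  For any `(λ−1)`-admissible
sequence `e`, the integer `λ_e = λ − (λ − 1 − ρ_e(λ−1))/2` satisfies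
`0 < λ_e ≤ λ`, it is independent of `h`, and for every `l < h < rd` one has
`(μ_r − ρ_e ρ_h(μ_r))/2 = p^h − λ_e`.  Consequently, for `l < h < h' < rd`,
`ρ_e ρ_h(μ_r) ≽ ρ_e ρ_{h'}(μ_r)`. -/
theorem admissible_reflection_of_mu
    (p : ℕ) (hp : p.Prime) (d : ℕ) (hd : 0 < d)
    (lam : ℕ) (hlam : 0 < lam)
    (r : ℕ) (hr : 0 < r) (hqr : (lam : ℤ) < (p : ℤ) ^ (d * r))
    (l : ℕ) (hl : pdigit p lam l ≠ 0) (hl' : ∀ t, l < t → pdigit p lam t = 0)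
    (e : List ℕ) (he : IsAdmSeq p e ((lam : ℤ) - 1)) :
    (0 < (lam : ℤ) - ((lam : ℤ) - 1 - rflSeq p e ((lam : ℤ) - 1)) / 2 ∧
      (lam : ℤ) - ((lam : ℤ) - 1 - rflSeq p e ((lam : ℤ) - 1)) / 2 ≤ (lam : ℤ)) ∧
    (∀ h : ℕ, l < h → h < r * d →
      ((p : ℤ) ^ (d * r) - 1 - lam -
          rflSeq p e (rfl' p h ((p : ℤ) ^ (d * r) - 1 - lam))) / 2 =
        (p : ℤ) ^ h -
          ((lam : ℤ) - ((lam : ℤ) - 1 - rflSeq p e ((lam : ℤ) - 1)) / 2)) ∧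
    (∀ h h' : ℕ, l < h → h < h' → h' < r * d →
      PrefOrder p ((p : ℤ) ^ (d * r) - 1 - lam)
        (rflSeq p e (rfl' p h ((p : ℤ) ^ (d * r) - 1 - lam)))
        (rflSeq p e (rfl' p h' ((p : ℤ) ^ (d * r) - 1 - lam)))) := by
  have hp2 : 2 ≤ p := hp.two_le
  set L : ℤ := (lam : ℤ) with hLdef
  set S : ℤ := rflSeq p e (L - 1) with hSdef
  have hL1 : (1:ℤ) ≤ L := by rw [hLdef]; exact_mod_cast hlam
  obtain ⟨hS1, hS2, ⟨D, hD⟩, hS4⟩ := adm_facts p e (L - 1) (by linarith) he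
  have hdiv2 : (L - 1 - S) / 2 = D := by omega
  have hlamlt : lam < p ^ (l + 1) := lt_pow_of_digits_zero p lam l (by omega) hlam hl'
  have hlamltZ : L < (p:ℤ) ^ (l+1) := by
    rw [hLdef]; exact_mod_cast hlamlt
  have hp1Z : (1:ℤ) ≤ (p:ℤ) := by exact_mod_cast hp.one_lt.le
  -- key computation
  have key2 : ∀ h : ℕ, l < h → h < r * d →
      rflSeq p e (rfl' p h ((p:ℤ)^(d*r) - 1 - L))
        = S + ((p:ℤ)^(d*r) - 2*(p:ℤ)^h) := by
    intro h hlh hhrd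
    have hhdr : h ≤ d * r := by
      have : r * d = d * r := Nat.mul_comm r d
      omega
    have hple_h : (p:ℤ)^(l+1) ≤ (p:ℤ)^h := pow_le_pow_right₀ hp1Z (by omega)
    have hstep : rfl' p h ((p:ℤ)^(d*r) - 1 - L)
        = (L - 1) + ((p:ℤ)^(d*r) - 2*(p:ℤ)^h) := by
      unfold rfl'
      have h1 : (p:ℤ)^(d*r) - 1 - L + 1
          = ((p:ℤ)^h - L) + (p:ℤ)^h * ((p:ℤ)^(d*r - h) - 1) := by
        rw [mul_sub, ← pow_add, show h + (d*r - h) = d*r by omega]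
        ring
      rw [h1, Int.add_mul_emod_self_left,
        Int.emod_eq_of_lt (by linarith) (by linarith)]
      ring
    rw [hstep, rflSeq_add]
    intro j hj
    have hj_le : (p:ℤ)^j ≤ L := by have := hS4 j hj; linarith
    have hj_leN : p^j ≤ lam := by rw [hLdef] at hj_le; exact_mod_cast hj_le
    have hjl : j < l + 1 := by
      have hpow : p^j < p^(l+1) := lt_of_le_of_lt hj_leN hlamlt
      exact (Nat.pow_lt_pow_iff_right (by omega)).mp hpow
    exact dvd_sub (pow_dvd_pow (p:ℤ) (by omega))
      ((pow_dvd_pow (p:ℤ) (by omega : j ≤ h)).mul_left 2)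
  refine ⟨?_, ?_, ?_⟩
  · rw [hdiv2]; omega
  · intro h hh1 hh2
    rw [key2 h hh1 hh2, hdiv2,
      show (p:ℤ)^(d*r) - 1 - L - (S + ((p:ℤ)^(d*r) - 2*(p:ℤ)^h))
        = 2 * ((p:ℤ)^h - (L - D)) by linarith,
      Int.mul_ediv_cancel_left _ two_ne_zero]
  · intro h h' hh1 hh2 hh3
    set A : ℕ := (L - D).toNat with hAdef
    have hA : (A:ℤ) = L - D := Int.toNat_of_nonneg (by omega)
    have hA1 : 0 < A := by omega
    have hApow : ∀ hh : ℕ, l < hh → A ≤ p ^ hh := by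
      intro hh h1
      have h2 : (p:ℤ)^(l+1) ≤ (p:ℤ)^hh := pow_le_pow_right₀ hp1Z (by omega)
      have h3 : ((p^hh : ℕ) : ℤ) = (p:ℤ)^hh := by push_cast; ring
      omega
    have htoNat : ∀ hh : ℕ, l < hh → hh < r * d →
        (((p:ℤ)^(d*r) - 1 - L - rflSeq p e (rfl' p hh ((p:ℤ)^(d*r) - 1 - L)))
          / 2).toNat = p ^ hh - A := by
      intro hh h1 h2
      rw [key2 hh h1 h2,
        show (p:ℤ)^(d*r) - 1 - L - (S + ((p:ℤ)^(d*r) - 2*(p:ℤ)^hh))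
          = 2 * ((p:ℤ)^hh - (L - D)) by linarith,
        Int.mul_ediv_cancel_left _ two_ne_zero]
      have h3 : ((p^hh : ℕ) : ℤ) = (p:ℤ)^hh := by push_cast; ring
      have h4 : A ≤ p ^ hh := hApow hh h1
      omega
    intro t ht
    rw [htoNat h' (by omega) hh3] at ht
    rw [htoNat h hh1 (by omega)]
    exact key_digits p (by omega) A h h' hA1 (hApow h hh1) (by omega) t ht
end
end

section
/- Let G = SL₂(𝔽̄_q), k = 𝔽̄_q, and λ a positive integer, regarded as the character of the upper-triangular Borel subgroup B sending diag(t, t^{-1})·u to t^λ. Then the induced module M(λ) = kG ⊗_{kB} k_λ admits an infinite strictly decreasing chain of kG-submodules; in particular, M(λ) has no composition series of finite length. -/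
/-!
Abstract setting: `G` is a connected reductive algebraic group over `𝔽̄_q`
defined over `𝔽_q` with standard Frobenius map, `B` an `F`-stable Borel
subgroup, `T ⊆ B` an `F`-stable maximal torus, `U` the unipotent radical of
`B`, `W = N_G(T)/T` the Weyl group with simple reflections `s i` (`i : I`),
length function `len`, and chosen representatives `rep w ∈ N_G(T)`.
Since the theory of reductive algebraic groups is not available in Mathlib,
the required structure is axiomatised by explicit data and hypotheses.
-/

open MonoidAlgebra

noncomputable section

/-- The element of the group algebra `k[G]` corresponding to a group element. -/
def ga (k : Type) [Field k] {G : Type} [Group G] (g : G) : MonoidAlgebra k G :=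
  MonoidAlgebra.single g 1

/-- The left ideal of `k[G]` defining the induced module `k[G] ⊗_{k[H]} k_χ`
of a character `χ` of a subgroup `H ≤ G`: it is generated by the elements
`b - χ(b)·1`, `b ∈ H`. -/
def indIdeal (k : Type) [Field k] {G : Type} [Group G] (H : Subgroup G) (χ : H → k) :
    Submodule (MonoidAlgebra k G) (MonoidAlgebra k G) :=
  Submodule.span (MonoidAlgebra k G)
    {x | ∃ b : H, x = ga k (b : G) - MonoidAlgebra.single 1 (χ b)}

/-- The induced module `M(χ) = k[G] ⊗_{k[H]} k_χ`, realised as the quotient of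
`k[G]` by the left ideal `indIdeal k H χ`. -/
abbrev IndMod (k : Type) [Field k] {G : Type} [Group G] (H : Subgroup G) (χ : H → k) : Type :=
  MonoidAlgebra k G ⧸ indIdeal k H χ

/-- The canonical generator `1 ⊗ 1_χ` of the induced module. -/
def indGen (k : Type) [Field k] {G : Type} [Group G] (H : Subgroup G) (χ : H → k) :
    IndMod k H χ := Submodule.Quotient.mk 1

/-- The upper triangular Borel subgroup of `SL₂(k)`. -/
def upperB (k : Type) [Field k] : Subgroup (Matrix.SpecialLinearGroup (Fin 2) k) where
  carrier := {g | (g : Matrix (Fin 2) (Fin 2) k) 1 0 = 0}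
  one_mem' := by
    simp [Matrix.SpecialLinearGroup.coe_one, Matrix.one_apply_ne]
  mul_mem' := by
    intro a b ha hb
    simp only [Set.mem_setOf_eq] at *
    simp [Matrix.SpecialLinearGroup.coe_mul, Matrix.mul_apply, Fin.sum_univ_two, ha, hb]
  inv_mem' := by
    intro g hg
    simp only [Set.mem_setOf_eq] at *
    rw [Matrix.SpecialLinearGroup.coe_inv, Matrix.adjugate_fin_two]
    simp [hg]

namespace SL2ChainAux

variable (p : ℕ) [Fact p.Prime] (k : Type) [Field k] [CharP k p] [PerfectRing k p]

abbrev SL2 := Matrix.SpecialLinearGroup (Fin 2) k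

/-- Iterated inverse Frobenius. -/
def phE (n : ℕ) : k ≃+* k := (frobeniusEquiv k p).symm ^ n

lemma phE_succ (n : ℕ) (x : k) :
    phE p k (n + 1) x = phE p k n ((frobeniusEquiv k p).symm x) := by
  show ((frobeniusEquiv k p).symm ^ (n+1)) x = _
  rw [pow_succ]; rfl

lemma phE_succ' (n : ℕ) (x : k) :
    phE p k (n + 1) x = (frobeniusEquiv k p).symm (phE p k n x) := by
  show ((frobeniusEquiv k p).symm ^ (n+1)) x = _
  rw [pow_succ']; rfl

lemma phE_p (n : ℕ) (x : k) : phE p k (n + 1) x ^ p = phE p k n x := by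
  rw [phE_succ']; exact frobeniusEquiv_symm_pow_p k p _

lemma phE_pow (n : ℕ) (x : k) : phE p k n x ^ p ^ n = x := by
  induction n generalizing x with
  | zero => simp [phE]
  | succ n ih =>
      rw [phE_succ', show p ^ (n+1) = p * p ^ n by ring, pow_mul,
        frobeniusEquiv_symm_pow_p, ih]

lemma phE_pow' (n : ℕ) (x : k) : phE p k n (x ^ p ^ n) = x := by
  induction n generalizing x with
  | zero => simp [phE]
  | succ n ih =>
      rw [show p ^ (n+1) = p ^ n * p by ring, pow_mul, phE_succ,
        ← frobenius_def, frobeniusEquiv_symm_apply_frobenius, ih]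

variable (lam : ℕ)

/-- The basic equivariant functions on `SL₂(k)`. -/
def fjf (n j : ℕ) : SL2 k → k := fun g =>
  phE p k n ((g : Matrix (Fin 2) (Fin 2) k) 0 0) ^ j *
  phE p k n ((g : Matrix (Fin 2) (Fin 2) k) 1 0) ^ (p ^ n * lam - j)

def Wgen (n : ℕ) : Set (SL2 k → k) := {f | ∃ j, j ≤ p ^ n * lam ∧ f = fjf p k lam n j}

def Wspan (n : ℕ) : Submodule k (SL2 k → k) := Submodule.span k (Wgen p k lam n)

/-- The pairing between the group algebra and functions on the group. -/
def pairx (x : MonoidAlgebra k (SL2 k)) : (SL2 k → k) →ₗ[k] k where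
  toFun f := Finsupp.linearCombination k f x.coeff
  map_add' f f' := by
    classical
    simp [Finsupp.linearCombination_apply, Finsupp.sum, smul_add, mul_add, Finset.sum_add_distrib]
  map_smul' c f := by
    classical
    simp [Finsupp.linearCombination_apply, Finsupp.sum, Finset.mul_sum, mul_left_comm]

lemma pairx_single (g : SL2 k) (c : k) (f : SL2 k → k) :
    pairx k (MonoidAlgebra.single g c) f = c * f g := by
  show Finsupp.linearCombination k f (Finsupp.single g c) = c * f g
  rw [Finsupp.linearCombination_single, smul_eq_mul]

lemma pairx_addx (x y : MonoidAlgebra k (SL2 k)) (f : SL2 k → k) :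
    pairx k (x + y) f = pairx k x f + pairx k y f := by
  show Finsupp.linearCombination k f (x.coeff + y.coeff) = _
  rw [map_add]; rfl

lemma pairx_subx (x y : MonoidAlgebra k (SL2 k)) (f : SL2 k → k) :
    pairx k (x - y) f = pairx k x f - pairx k y f := by
  show Finsupp.linearCombination k f (x.coeff - y.coeff) = _
  rw [map_sub]; rfl

lemma pairx_zerox (f : SL2 k → k) : pairx k 0 f = 0 := by
  show Finsupp.linearCombination k f 0 = 0
  rw [map_zero]

lemma pairx_smulx (c : k) (x : MonoidAlgebra k (SL2 k)) (f : SL2 k → k) :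
    pairx k (c • x) f = c * pairx k x f := by
  show Finsupp.linearCombination k f (c • x.coeff) = _
  rw [map_smul, smul_eq_mul]; rfl

lemma pairx_mul_single (h : SL2 k) (x : MonoidAlgebra k (SL2 k)) (f : SL2 k → k) :
    pairx k (MonoidAlgebra.single h 1 * x) f = pairx k x (fun g => f (h * g)) := by
  induction x using MonoidAlgebra.induction_linear with
  | zero => rw [mul_zero]; rw [pairx_zerox, pairx_zerox]
  | add a b ha hb => rw [mul_add, pairx_addx, pairx_addx, ha, hb]
  | single g a =>
      rw [MonoidAlgebra.single_mul_single, one_mul, pairx_single, pairx_single]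

lemma sl2_entry_mul (g h : SL2 k) (i : Fin 2) :
    ((g * h : SL2 k) : Matrix (Fin 2) (Fin 2) k) i 0 =
      (g : Matrix (Fin 2) (Fin 2) k) i 0 * (h : Matrix (Fin 2) (Fin 2) k) 0 0 +
      (g : Matrix (Fin 2) (Fin 2) k) i 1 * (h : Matrix (Fin 2) (Fin 2) k) 1 0 := by
  rw [Matrix.SpecialLinearGroup.coe_mul, Matrix.mul_apply, Fin.sum_univ_two]

/-- Translation stability of the generators. -/
lemma fjf_translate (n j : ℕ) (hj : j ≤ p ^ n * lam) (h : SL2 k) :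
    (fun g => fjf p k lam n j (h * g)) ∈ Wspan p k lam n := by
  classical
  set d := p ^ n * lam with hd
  set A := phE p k n ((h : Matrix (Fin 2) (Fin 2) k) 0 0) with hA
  set B := phE p k n ((h : Matrix (Fin 2) (Fin 2) k) 0 1) with hB
  set C := phE p k n ((h : Matrix (Fin 2) (Fin 2) k) 1 0) with hC
  set D := phE p k n ((h : Matrix (Fin 2) (Fin 2) k) 1 1) with hD
  have key : (fun g => fjf p k lam n j (h * g)) =
      ∑ i ∈ Finset.range (j+1), ∑ l ∈ Finset.range (d-j+1),
        (A ^ i * B ^ (j-i) * (j.choose i : k) * (C ^ l * D ^ (d-j-l) * ((d-j).choose l : k))) •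
          fjf p k lam n (i+l) := by
    funext g
    set X := phE p k n ((g : Matrix (Fin 2) (Fin 2) k) 0 0) with hX
    set Y := phE p k n ((g : Matrix (Fin 2) (Fin 2) k) 1 0) with hY
    have e0 : fjf p k lam n j (h * g) = (A*X + B*Y) ^ j * (C*X + D*Y) ^ (d - j) := by
      unfold fjf
      rw [sl2_entry_mul, sl2_entry_mul, map_add, map_add, map_mul, map_mul, map_mul, map_mul]
    rw [e0, add_pow, add_pow, Finset.sum_mul_sum]
    rw [Finset.sum_apply]
    refine Finset.sum_congr rfl (fun i hi => ?_)
    rw [Finset.sum_apply]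
    refine Finset.sum_congr rfl (fun l hl => ?_)
    have hi' : i ≤ j := Nat.lt_succ_iff.mp (Finset.mem_range.mp hi)
    have hl' : l ≤ d - j := Nat.lt_succ_iff.mp (Finset.mem_range.mp hl)
    have hexp : d - (i + l) = (j - i) + (d - j - l) := by omega
    simp only [Pi.smul_apply, smul_eq_mul, fjf, ← hX, ← hY, ← hd]
    rw [hexp, pow_add, pow_add, mul_pow, mul_pow, mul_pow, mul_pow]
    ring
  rw [key]
  refine Submodule.sum_mem _ (fun i hi => Submodule.sum_mem _ (fun l hl => ?_))
  refine Submodule.smul_mem _ _ (Submodule.subset_span ?_)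
  have hi' := Finset.mem_range.mp hi
  have hl' := Finset.mem_range.mp hl
  exact ⟨i + l, by omega, rfl⟩

lemma Wspan_translate (n : ℕ) (h : SL2 k) {f : SL2 k → k} (hf : f ∈ Wspan p k lam n) :
    (fun g => f (h * g)) ∈ Wspan p k lam n := by
  have hT : Wspan p k lam n ≤
      Submodule.comap (LinearMap.funLeft k k (fun g : SL2 k => h * g)) (Wspan p k lam n) := by
    refine Submodule.span_le.mpr ?_
    rintro f ⟨j, hj, rfl⟩
    exact fjf_translate p k lam n j hj h
  exact hT hf

/-- The submodule of the group algebra of elements annihilated by all `W n` functions. -/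
def Kn (n : ℕ) : Submodule (MonoidAlgebra k (SL2 k)) (MonoidAlgebra k (SL2 k)) where
  carrier := {x | ∀ f ∈ Wspan p k lam n, pairx k x f = 0}
  zero_mem' := fun f _ => pairx_zerox k f
  add_mem' := by
    intro x y hx hy f hf
    rw [pairx_addx, hx f hf, hy f hf, add_zero]
  smul_mem' := by
    intro r x hx
    have main : ∀ f ∈ Wspan p k lam n, pairx k (r * x) f = 0 := by
      induction r using MonoidAlgebra.induction_linear with
      | zero => intro f hf; rw [zero_mul]; exact pairx_zerox k f
      | add a b ha hb =>
          intro f hf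
          rw [add_mul, pairx_addx, ha f hf, hb f hf, add_zero]
      | single h a =>
          intro f hf
          have h1 : (MonoidAlgebra.single h a : MonoidAlgebra k (SL2 k)) =
              a • MonoidAlgebra.single h 1 := by
            rw [MonoidAlgebra.smul_single', mul_one]
          rw [h1, smul_mul_assoc, pairx_smulx, pairx_mul_single,
            hx _ (Wspan_translate p k lam n h hf), mul_zero]
    exact main
  
lemma mem_Kn_iff (n : ℕ) (x : MonoidAlgebra k (SL2 k)) :
    x ∈ Kn p k lam n ↔ ∀ j ≤ p ^ n * lam, pairx k x (fjf p k lam n j) = 0 := by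
  constructor
  · intro hx j hj
    exact hx _ (Submodule.subset_span ⟨j, hj, rfl⟩)
  · intro hx f hf
    have : Wspan p k lam n ≤ LinearMap.ker (pairx k x) := by
      refine Submodule.span_le.mpr ?_
      rintro f ⟨j, hj, rfl⟩
      exact hx j hj
    exact this hf

lemma fjf_right (n j : ℕ) (hj : j ≤ p ^ n * lam) (g b : SL2 k) (hb : b ∈ upperB k) :
    fjf p k lam n j (g * b) =
      (b : Matrix (Fin 2) (Fin 2) k) 0 0 ^ lam * fjf p k lam n j g := by
  have hb0 : (b : Matrix (Fin 2) (Fin 2) k) 1 0 = 0 := hb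
  set d := p ^ n * lam with hd
  set X := phE p k n ((g : Matrix (Fin 2) (Fin 2) k) 0 0) with hX
  set Y := phE p k n ((g : Matrix (Fin 2) (Fin 2) k) 1 0) with hY
  set T := phE p k n ((b : Matrix (Fin 2) (Fin 2) k) 0 0) with hT
  have e0 : fjf p k lam n j (g * b) = (X * T) ^ j * (Y * T) ^ (d - j) := by
    unfold fjf
    rw [sl2_entry_mul, sl2_entry_mul, hb0, mul_zero, mul_zero, add_zero, add_zero,
      map_mul, map_mul]
  have hTd : T ^ d = (b : Matrix (Fin 2) (Fin 2) k) 0 0 ^ lam := by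
    rw [hd, pow_mul, phE_pow]
  have e1 : (X * T) ^ j * (Y * T) ^ (d - j) = T ^ d * (X ^ j * Y ^ (d - j)) := by
    rw [mul_pow, mul_pow, show d = j + (d - j) by omega]
    rw [pow_add T, Nat.add_sub_cancel_left]
    ring
  rw [e0, e1, hTd, show fjf p k lam n j g = X ^ j * Y ^ (d - j) from rfl]

lemma indIdeal_le_Kn (n : ℕ) :
    indIdeal k (upperB k)
      (fun b : ↥(upperB k) =>
        ((b : SL2 k) : Matrix (Fin 2) (Fin 2) k) 0 0 ^ lam) ≤ Kn p k lam n := by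
  refine Submodule.span_le.mpr ?_
  rintro x ⟨b, rfl⟩
  intro f hf
  rw [pairx_subx]
  have key : ∀ f ∈ Wspan p k lam n,
      f (b : SL2 k) = ((b : SL2 k) : Matrix (Fin 2) (Fin 2) k) 0 0 ^ lam * f 1 := by
    intro f hf
    have hker : Wspan p k lam n ≤ LinearMap.ker
        ((LinearMap.proj (b : SL2 k) : (SL2 k → k) →ₗ[k] k) -
          (((b : SL2 k) : Matrix (Fin 2) (Fin 2) k) 0 0 ^ lam) •
            (LinearMap.proj (1 : SL2 k) : (SL2 k → k) →ₗ[k] k)) := by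
      refine Submodule.span_le.mpr ?_
      rintro f ⟨j, hj, rfl⟩
      have heq := fjf_right p k lam n j hj 1 (b : SL2 k) b.2
      rw [one_mul] at heq
      refine LinearMap.mem_ker.mpr ?_
      rw [LinearMap.sub_apply, LinearMap.smul_apply, LinearMap.proj_apply,
        LinearMap.proj_apply, smul_eq_mul, heq, sub_self]
    have hthis := hker hf
    rw [LinearMap.mem_ker, LinearMap.sub_apply, LinearMap.smul_apply, LinearMap.proj_apply,
      LinearMap.proj_apply, smul_eq_mul] at hthis
    exact sub_eq_zero.mp hthis
  rw [show ga k (b : SL2 k) = MonoidAlgebra.single (b : SL2 k) 1 from rfl,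
    pairx_single, pairx_single, one_mul, key f hf, sub_self]

lemma fjf_shift (n j : ℕ) (hj : j ≤ p ^ n * lam) :
    fjf p k lam n j = fjf p k lam (n+1) (p * j) := by
  funext g
  unfold fjf
  rw [← phE_p p k n ((g : Matrix (Fin 2) (Fin 2) k) 0 0),
    ← phE_p p k n ((g : Matrix (Fin 2) (Fin 2) k) 1 0), ← pow_mul, ← pow_mul, Nat.mul_sub,
    show p * (p ^ n * lam) = p ^ (n+1) * lam by ring]

lemma Wgen_mono (n : ℕ) : Wgen p k lam n ⊆ Wgen p k lam (n+1) := by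
  rintro f ⟨j, hj, rfl⟩
  exact ⟨p * j, by
    calc p * j ≤ p * (p ^ n * lam) := Nat.mul_le_mul_left p hj
    _ = p ^ (n+1) * lam := by ring, fjf_shift p k lam n j hj⟩

lemma Kn_anti (n : ℕ) : Kn p k lam (n+1) ≤ Kn p k lam n := by
  intro x hx f hf
  refine hx f ?_
  exact Submodule.span_mono (Wgen_mono p k lam n) hf

/-- Lower unipotent matrices. -/
def lowv (c : k) : SL2 k := ⟨!![1, 0; c, 1], by simp [Matrix.det_fin_two_of]⟩

lemma lowv_00 (c : k) : ((lowv k c : SL2 k) : Matrix (Fin 2) (Fin 2) k) 0 0 = 1 := rfl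
lemma lowv_10 (c : k) : ((lowv k c : SL2 k) : Matrix (Fin 2) (Fin 2) k) 1 0 = c := rfl

lemma fjf_lowv_low (n j : ℕ) (eps : kˣ) :
    fjf p k lam n j (lowv k ((eps : k) ^ p ^ (n+1))) =
      (eps : k) ^ (p * (p ^ n * lam - j)) := by
  unfold fjf
  rw [lowv_00, lowv_10, map_one, one_pow, one_mul,
    show ((eps : k) ^ p ^ (n+1)) = ((eps : k) ^ p) ^ p ^ n by
      rw [← pow_mul, show p * p ^ n = p ^ (n+1) by ring],
    phE_pow', ← pow_mul]

lemma fjf_lowv_high (n : ℕ) (eps : kˣ) :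
    fjf p k lam (n+1) 1 (lowv k ((eps : k) ^ p ^ (n+1))) =
      (eps : k) ^ (p ^ (n+1) * lam - 1) := by
  unfold fjf
  rw [lowv_00, lowv_10, map_one, one_pow, one_mul, phE_pow']

section chars
variable [Infinite k]

def expUhom (e : ℕ) : kˣ →* k := (Units.coeHom k).comp (powMonoidHom e)

lemma expUhom_apply (e : ℕ) (eps : kˣ) : expUhom k e eps = (eps : k) ^ e := by
  simp [expUhom, powMonoidHom]

lemma expUhom_injective : Function.Injective (expUhom k) := by
  have main : ∀ e e' : ℕ, e < e' → expUhom k e = expUhom k e' → False := by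
    intro e e' hlt hee
    have hroot : ∀ x : k, x ≠ 0 → x ^ (e' - e) = 1 := by
      intro x hx
      have h1 := DFunLike.congr_fun hee (Units.mk0 x hx)
      rw [expUhom_apply, expUhom_apply] at h1
      have h2 : (Units.mk0 x hx : k) = x := rfl
      rw [h2] at h1
      have h3 : x ^ e * x ^ (e' - e) = x ^ e * 1 := by
        rw [mul_one, ← pow_add, show e + (e' - e) = e' by omega, h1]
      exact mul_left_cancel₀ (pow_ne_zero e hx) h3
    have hq : (Polynomial.X ^ (e' - e) - Polynomial.C 1 : Polynomial k) ≠ 0 :=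
      Polynomial.X_pow_sub_C_ne_zero (by omega) 1
    have hfin := Polynomial.finite_setOf_isRoot hq
    have hsub : (Set.univ : Set k) ⊆
        insert 0 {x | Polynomial.IsRoot (Polynomial.X ^ (e' - e) - Polynomial.C 1) x} := by
      intro x _
      by_cases hx : x = 0
      · exact Set.mem_insert_iff.mpr (Or.inl hx)
      · refine Set.mem_insert_iff.mpr (Or.inr ?_)
        show Polynomial.eval x _ = 0
        simp [hroot x hx]
    exact Set.infinite_univ (Set.Finite.subset (hfin.insert 0) hsub)
  intro e e' hee
  by_contra hne
  rcases Nat.lt_or_ge e e' with h | h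
  · exact main e e' h hee
  · exact main e' e (by omega) hee.symm

lemma exists_annihilating (d e0 : ℕ) (he0 : ∀ m, m ≤ d → e0 ≠ p * m) :
    ∃ a : kˣ →₀ k,
      (∀ m ≤ d, Finsupp.linearCombination k (fun eps : kˣ => (eps : k) ^ (p * m)) a = 0) ∧
      Finsupp.linearCombination k (fun eps : kˣ => (eps : k) ^ e0) a ≠ 0 := by
  classical
  by_contra hcon
  push_neg at hcon
  set L : Fin (d+1) → (kˣ →₀ k) →ₗ[k] k :=
    fun m => Finsupp.linearCombination k (fun eps : kˣ => (eps : k) ^ (p * (m : ℕ))) with hL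
  set K : (kˣ →₀ k) →ₗ[k] k :=
    Finsupp.linearCombination k (fun eps : kˣ => (eps : k) ^ e0) with hK
  have hker : ⨅ i, LinearMap.ker (L i) ≤ LinearMap.ker K := by
    intro a ha
    rw [LinearMap.mem_ker]
    refine hcon a ?_
    intro m hm
    exact (Submodule.mem_iInf _).mp ha ⟨m, by omega⟩
  have hspan := mem_span_of_iInf_ker_le_ker hker
  obtain ⟨c, hc⟩ := (Submodule.mem_span_range_iff_exists_fun k).mp hspan
  have heval : ∀ eps : kˣ, (eps : k) ^ e0 = ∑ i : Fin (d+1), c i * (eps : k) ^ (p * (i : ℕ)) := by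
    intro eps
    have h1 := congrArg (fun φ : (kˣ →₀ k) →ₗ[k] k => φ (Finsupp.single eps 1)) hc
    simp only [LinearMap.coe_sum, Finset.sum_apply, LinearMap.smul_apply, hL, hK,
      Finsupp.linearCombination_single, one_smul, smul_eq_mul, one_mul] at h1
    exact h1.symm
  -- the exponent map into monoid homs
  set eexp : Option (Fin (d+1)) → ℕ := fun o => Option.elim o e0 (fun i => p * (i : ℕ)) with heexp
  have hpp : 0 < p := (Fact.out : p.Prime).pos
  have heinj : Function.Injective eexp := by
    intro o o' hoo
    match o, o' with
    | none, none => rfl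
    | some i, some j =>
        have : p * (i : ℕ) = p * (j : ℕ) := hoo
        have := Nat.eq_of_mul_eq_mul_left hpp this
        exact congrArg some (Fin.ext this)
    | none, some i => exact absurd hoo (he0 i (by omega))
    | some i, none => exact absurd hoo.symm (he0 i (by omega))
  have li : LinearIndependent k (fun o : Option (Fin (d+1)) => ⇑(expUhom k (eexp o))) :=
    (linearIndependent_monoidHom kˣ k).comp _ ((expUhom_injective k).comp heinj)
  have hnone : (none : Option (Fin (d+1))) ∉ Set.range (Option.some : Fin (d+1) → Option (Fin (d+1))) := by
    simp
  have hnm := li.notMem_span_image (s := Set.range (Option.some : Fin (d+1) → Option (Fin (d+1)))) hnone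
  apply hnm
  have himg : (fun o : Option (Fin (d+1)) => ⇑(expUhom k (eexp o))) '' Set.range Option.some =
      Set.range (fun i : Fin (d+1) => ⇑(expUhom k (p * (i : ℕ)))) := by
    rw [← Set.range_comp]
    rfl
  rw [himg]
  refine (Submodule.mem_span_range_iff_exists_fun k).mpr ⟨c, ?_⟩
  funext eps
  have : eexp none = e0 := rfl
  rw [this]
  rw [Finset.sum_apply]
  simp only [Pi.smul_apply, smul_eq_mul, expUhom_apply]
  exact (heval eps).symm

end chars

lemma exists_witness [Infinite k] (hlam : 0 < lam) (n : ℕ) :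
    ∃ x, x ∈ Kn p k lam n ∧ x ∉ Kn p k lam (n+1) := by
  have hp2 : 2 ≤ p := (Fact.out : p.Prime).two_le
  set d := p ^ n * lam with hd
  have hd1 : 1 ≤ d := Nat.mul_pos (pow_pos (by omega) n) hlam
  have hd1' : 1 ≤ p ^ (n+1) * lam := Nat.mul_pos (pow_pos (by omega) (n+1)) hlam
  have hpd : p ^ (n+1) * lam = p * d := by rw [hd]; ring
  have he0 : ∀ m, m ≤ d → p ^ (n+1) * lam - 1 ≠ p * m := by
    intro m hm heq
    rw [hpd] at heq
    have hpd2 : 2 ≤ p * d := le_trans hp2 (Nat.le_mul_of_pos_right p hd1)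
    have h1 : p * m + 1 = p * d := by omega
    have h2 : p * (d - m) = 1 := by rw [Nat.mul_sub]; omega
    have h3 : p ≤ 1 := Nat.le_of_dvd Nat.one_pos ⟨d - m, h2.symm⟩
    omega
  obtain ⟨a, ha0, ha1⟩ := exists_annihilating p k d (p ^ (n+1) * lam - 1) he0
  set x : MonoidAlgebra k (SL2 k) :=
    MonoidAlgebra.ofCoeff (Finsupp.mapDomain (fun eps : kˣ => lowv k ((eps : k) ^ p ^ (n+1))) a) with hx
  have hpair : ∀ f : SL2 k → k, pairx k x f =
      Finsupp.linearCombination k (fun eps : kˣ => f (lowv k ((eps : k) ^ p ^ (n+1)))) a := by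
    intro f
    show Finsupp.linearCombination k f (Finsupp.mapDomain _ a) = _
    rw [Finsupp.linearCombination_mapDomain]
    rfl
  refine ⟨x, ?_, ?_⟩
  · rw [mem_Kn_iff]
    intro j hj
    rw [hpair]
    have hfe : (fun eps : kˣ => fjf p k lam n j (lowv k ((eps : k) ^ p ^ (n+1)))) =
        fun eps : kˣ => (eps : k) ^ (p * (d - j)) := by
      funext eps
      exact fjf_lowv_low p k lam n j eps
    rw [hfe]
    exact ha0 (d - j) (by omega)
  · intro hmem
    have h1 := (mem_Kn_iff p k lam (n+1) x).mp hmem 1 hd1'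
    rw [hpair] at h1
    have hfe2 : (fun eps : kˣ => fjf p k lam (n+1) 1 (lowv k ((eps : k) ^ p ^ (n+1)))) =
        fun eps : kˣ => (eps : k) ^ (p ^ (n+1) * lam - 1) := by
      funext eps
      exact fjf_lowv_high p k lam n eps
    rw [hfe2] at h1
    exact ha1 h1

end SL2ChainAux

/-- **Corollary 4.10.**  Let `G = SL₂(𝔽̄_q)`, `k = 𝔽̄_q` and `λ` a positive
integer, regarded as the character of the upper triangular Borel subgroup `B`
sending `diag(t,t⁻¹)·u ↦ t^λ`.  Then `M(λ) = k[G] ⊗_{k[B]} k_λ` admits an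
infinite strictly decreasing chain of `k[G]`-submodules; in particular `M(λ)`
has no composition series of finite length. -/
theorem sl2_induced_module_infinite_chain
    (p : ℕ) [Fact p.Prime] (k : Type) [Field k] [IsAlgClosed k] [CharP k p]
    (halg : ∀ x : k, ∃ n : ℕ, 0 < n ∧ x ^ p ^ n = x)
    (lam : ℕ) (hlam : 0 < lam) :
    (∃ N : ℕ → Submodule
        (MonoidAlgebra k (Matrix.SpecialLinearGroup (Fin 2) k))
        (IndMod k (upperB k)
          (fun b : ↥(upperB k) =>
            ((b : Matrix.SpecialLinearGroup (Fin 2) k) : Matrix (Fin 2) (Fin 2) k) 0 0 ^ lam)),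
      StrictAnti N) ∧
    ¬∃ c : CompositionSeries (Submodule
        (MonoidAlgebra k (Matrix.SpecialLinearGroup (Fin 2) k))
        (IndMod k (upperB k)
          (fun b : ↥(upperB k) =>
            ((b : Matrix.SpecialLinearGroup (Fin 2) k) : Matrix (Fin 2) (Fin 2) k) 0 0 ^ lam))),
      c.head = ⊥ ∧ c.last = ⊤ := by
  classical
  set χ : ↥(upperB k) → k := fun b =>
    ((b : Matrix.SpecialLinearGroup (Fin 2) k) : Matrix (Fin 2) (Fin 2) k) 0 0 ^ lam with hχ
  set I := indIdeal k (upperB k) χ with hI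
  have hle : ∀ n, I ≤ SL2ChainAux.Kn p k lam n := fun n => SL2ChainAux.indIdeal_le_Kn p k lam n
  have hKlt : ∀ n, SL2ChainAux.Kn p k lam (n+1) < SL2ChainAux.Kn p k lam n := by
    intro n
    obtain ⟨x, hx1, hx2⟩ := SL2ChainAux.exists_witness p k lam hlam n
    exact lt_of_le_of_ne (SL2ChainAux.Kn_anti p k lam n) (fun h => hx2 (h.symm ▸ hx1))
  set N : ℕ → Submodule (MonoidAlgebra k (Matrix.SpecialLinearGroup (Fin 2) k))
      (IndMod k (upperB k) χ) :=
    fun n => Submodule.map I.mkQ (SL2ChainAux.Kn p k lam n) with hN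
  have hanti : StrictAnti N := by
    apply strictAnti_nat_of_succ_lt
    intro n
    refine lt_of_le_of_ne (Submodule.map_mono (SL2ChainAux.Kn_anti p k lam n)) ?_
    intro heq
    have h2 := congrArg (Submodule.comap I.mkQ) heq
    rw [Submodule.comap_map_eq, Submodule.comap_map_eq, Submodule.ker_mkQ,
      sup_eq_left.mpr (hle (n+1)), sup_eq_left.mpr (hle n)] at h2
    exact (hKlt n).ne h2
  refine ⟨⟨N, hanti⟩, ?_⟩
  rintro ⟨c, hhead, hlast⟩
  have hfin : IsFiniteLength (MonoidAlgebra k (Matrix.SpecialLinearGroup (Fin 2) k))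
      (IndMod k (upperB k) χ) :=
    isFiniteLength_iff_exists_compositionSeries.mpr ⟨c, hhead, hlast⟩
  have hart := (isFiniteLength_iff_isNoetherian_isArtinian.mp hfin).2
  have hwf := (isArtinian_iff _ _).mp hart
  obtain ⟨b, ⟨n, rfl⟩, hmin⟩ := hwf.has_min (Set.range N) ⟨N 0, 0, rfl⟩
  exact hmin (N (n+1)) ⟨n+1, rfl⟩ (hanti (Nat.lt_succ_self n))
end
end
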